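/- Let G be a finite simple graph, d ≥ 1 an integer, and V' ⊆ V(G) a set of vertices such that V(G) ∖ V' is an independent set and every vertex u ∈ V(G) ∖ V' has a nonempty neighborhood contained in V'. Let H = G[V'] be the induced subgraph and let (A', B') be a d-cut of H such that for every u ∈ V(G) ∖ V', either N(u) ⊆ A' or N(u) ⊆ B'. Let J_A = {u ∈ V(G) ∖ V' : N(u) ⊆ A'} and J_B = {u ∈ V(G) ∖ V' : N(u) ⊆ B'}. Suppose P ⊆ J_B and Q ⊆ J_A satisfy: (i) every vertex of P has at most d neighbors in B'; (ii) every vertex of Q has at most d neighbors in A'; (iii) every vertex u ∈ A' has at most d − |N(u) ∩ B'| neighbors in Q; and (iv) every vertex u ∈ B' has at most d − |N(u) ∩ A'| neighbors in P. Then (A' ∪ P ∪ (J_A ∖ Q), B' ∪ Q ∪ (J_B ∖ P)) is a d-cut of G whose edge cut contains the edge cut E_H(A', B'). -/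
import Mathlib


variable {V : Type*}

/-- A `d`-cut of a simple graph `G`: a partition `(A, B)` of the vertex set into two
nonempty parts such that every vertex of `A` has at most `d` neighbors in `B` and
every vertex of `B` has at most `d` neighbors in `A`. -/
def IsDCut (G : SimpleGraph V) (d : ℕ) (A B : Set V) : Prop :=
  A.Nonempty ∧ B.Nonempty ∧ Disjoint A B ∧ A ∪ B = Set.univ ∧
    (∀ v ∈ A, (G.neighborSet v ∩ B).ncard ≤ d) ∧
    (∀ v ∈ B, (G.neighborSet v ∩ A).ncard ≤ d)

/-- A vertex set `T` is monochromatic if every `d`-cut of `G` has `T` entirely on one side. -/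
def Monochromatic (G : SimpleGraph V) (d : ℕ) (T : Set V) : Prop :=
  ∀ A B : Set V, IsDCut G d A B → T ⊆ A ∨ T ⊆ B

/-- The edge cut of a cut `(A, B)`: the set of edges of `G` with one endpoint in `A`
and the other endpoint in `B`. -/
def edgeCut (G : SimpleGraph V) (A B : Set V) : Set (Sym2 V) :=
  {e | e ∈ G.edgeSet ∧ ∃ u v, e = s(u, v) ∧ u ∈ A ∧ v ∈ B}

/-- A minimal `d`-cut: no `d`-cut has an edge cut that is a proper subset of its edge cut. -/
def IsMinimalDCut (G : SimpleGraph V) (d : ℕ) (A B : Set V) : Prop :=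
  IsDCut G d A B ∧ ∀ A' B' : Set V, IsDCut G d A' B' → ¬ edgeCut G A' B' ⊂ edgeCut G A B

/-- A maximal `d`-cut: no `d`-cut has an edge cut that properly contains its edge cut. -/
def IsMaximalDCut (G : SimpleGraph V) (d : ℕ) (A B : Set V) : Prop :=
  IsDCut G d A B ∧ ∀ A' B' : Set V, IsDCut G d A' B' → ¬ edgeCut G A B ⊂ edgeCut G A' B'

/-- Legal extensions of a `d`-cut of the induced subgraph `H = G[V']` are `d`-cuts of
`G`. Here `V(G) ∖ V'` is an independent set whose vertices have nonempty neighborhoods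
contained in `V'`; `(A', B')` is a `d`-cut of `H` such that every vertex outside `V'`
has its neighborhood inside `A'` or inside `B'`;
`J_A = {u ∉ V' : N(u) ⊆ A'}` and `J_B = {u ∉ V' : N(u) ⊆ B'}`; and `(P, Q)` is a legal
pair. Then `(A' ∪ P ∪ (J_A ∖ Q), B' ∪ Q ∪ (J_B ∖ P))` is a `d`-cut of `G` whose edge cut
contains the edge cut of `(A', B')`. -/
theorem legal_extension_is_dcut [Fintype V] (G : SimpleGraph V) (d : ℕ) (hd : 1 ≤ d)
    (V' : Set V)
    (hindep : (V'ᶜ : Set V).Pairwise fun x y => ¬ G.Adj x y)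
    (hnbhd : ∀ u ∉ V', (G.neighborSet u).Nonempty ∧ G.neighborSet u ⊆ V')
    (A' B' : Set V) (hA'ne : A'.Nonempty) (hB'ne : B'.Nonempty)
    (hdisj : Disjoint A' B') (hunion : A' ∪ B' = V')
    (hcutA : ∀ v ∈ A', (G.neighborSet v ∩ B').ncard ≤ d)
    (hcutB : ∀ v ∈ B', (G.neighborSet v ∩ A').ncard ≤ d)
    (hmono : ∀ u ∉ V', G.neighborSet u ⊆ A' ∨ G.neighborSet u ⊆ B')
    (P Q : Set V)
    (hP : P ⊆ {u | u ∉ V' ∧ G.neighborSet u ⊆ B'})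
    (hQ : Q ⊆ {u | u ∉ V' ∧ G.neighborSet u ⊆ A'})
    (h1 : ∀ v ∈ P, (G.neighborSet v ∩ B').ncard ≤ d)
    (h2 : ∀ v ∈ Q, (G.neighborSet v ∩ A').ncard ≤ d)
    (h3 : ∀ v ∈ A', (G.neighborSet v ∩ Q).ncard ≤ d - (G.neighborSet v ∩ B').ncard)
    (h4 : ∀ v ∈ B', (G.neighborSet v ∩ P).ncard ≤ d - (G.neighborSet v ∩ A').ncard) :
    IsDCut G d (A' ∪ P ∪ ({u | u ∉ V' ∧ G.neighborSet u ⊆ A'} \ Q))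
               (B' ∪ Q ∪ ({u | u ∉ V' ∧ G.neighborSet u ⊆ B'} \ P)) ∧
    edgeCut G A' B' ⊆
      edgeCut G (A' ∪ P ∪ ({u | u ∉ V' ∧ G.neighborSet u ⊆ A'} \ Q))
                (B' ∪ Q ∪ ({u | u ∉ V' ∧ G.neighborSet u ⊆ B'} \ P)) := by
  
  set JA : Set V := {u | u ∉ V' ∧ G.neighborSet u ⊆ A'} with hJAdef
  set JB : Set V := {u | u ∉ V' ∧ G.neighborSet u ⊆ B'} with hJBdef
  have hA'V' : A' ⊆ V' := hunion ▸ Set.subset_union_left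
  have hB'V' : B' ⊆ V' := hunion ▸ Set.subset_union_right
  have hJAB : ∀ u, u ∈ JA → u ∈ JB → False := by
    intro u hA hB
    obtain ⟨⟨w, hw⟩, -⟩ := hnbhd u hA.1
    exact Set.disjoint_left.mp hdisj (hA.2 hw) (hB.2 hw)
  -- degree bounds
  have keyA : ∀ v ∈ A' ∪ P ∪ (JA \ Q),
      (G.neighborSet v ∩ (B' ∪ Q ∪ (JB \ P))).ncard ≤ d := by
    rintro v ((hv | hv) | hv)
    · have hsub : G.neighborSet v ∩ (B' ∪ Q ∪ (JB \ P)) ⊆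
          (G.neighborSet v ∩ B') ∪ (G.neighborSet v ∩ Q) := by
        rintro u ⟨hu, (hb | hb) | hb⟩
        · exact Or.inl ⟨hu, hb⟩
        · exact Or.inr ⟨hu, hb⟩
        · have : v ∈ G.neighborSet u := (G.adj_symm hu)
          exact absurd (hb.1.2 this) fun h => Set.disjoint_left.mp hdisj hv h
      calc (G.neighborSet v ∩ (B' ∪ Q ∪ (JB \ P))).ncard
          ≤ ((G.neighborSet v ∩ B') ∪ (G.neighborSet v ∩ Q)).ncard :=
            Set.ncard_le_ncard hsub (Set.toFinite _)
        _ ≤ (G.neighborSet v ∩ B').ncard + (G.neighborSet v ∩ Q).ncard :=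
            Set.ncard_union_le _ _
        _ ≤ d := by have := h3 v hv; have := hcutA v hv; omega
    · have hsub : G.neighborSet v ∩ (B' ∪ Q ∪ (JB \ P)) ⊆ G.neighborSet v ∩ B' := by
        rintro u ⟨hu, (hb | hb) | hb⟩
        · exact ⟨hu, hb⟩
        · exact absurd (hB'V' ((hP hv).2 hu)) (hQ hb).1
        · exact absurd (hB'V' ((hP hv).2 hu)) hb.1.1
      exact le_trans (Set.ncard_le_ncard hsub (Set.toFinite _)) (h1 v hv)
    · have hsub : G.neighborSet v ∩ (B' ∪ Q ∪ (JB \ P)) ⊆ (∅ : Set V) := by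
        rintro u ⟨hu, (hb | hb) | hb⟩
        · exact absurd (hv.1.2 hu) fun h => Set.disjoint_left.mp hdisj h hb
        · exact absurd (hA'V' (hv.1.2 hu)) (hQ hb).1
        · exact absurd (hA'V' (hv.1.2 hu)) hb.1.1
      have := Set.ncard_le_ncard hsub (Set.toFinite _)
      rw [Set.ncard_empty] at this; omega
  have keyB : ∀ v ∈ B' ∪ Q ∪ (JB \ P),
      (G.neighborSet v ∩ (A' ∪ P ∪ (JA \ Q))).ncard ≤ d := by
    rintro v ((hv | hv) | hv)
    · have hsub : G.neighborSet v ∩ (A' ∪ P ∪ (JA \ Q)) ⊆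
          (G.neighborSet v ∩ A') ∪ (G.neighborSet v ∩ P) := by
        rintro u ⟨hu, (hb | hb) | hb⟩
        · exact Or.inl ⟨hu, hb⟩
        · exact Or.inr ⟨hu, hb⟩
        · have : v ∈ G.neighborSet u := (G.adj_symm hu)
          exact absurd (hb.1.2 this) fun h => Set.disjoint_left.mp hdisj h hv
      calc (G.neighborSet v ∩ (A' ∪ P ∪ (JA \ Q))).ncard
          ≤ ((G.neighborSet v ∩ A') ∪ (G.neighborSet v ∩ P)).ncard :=
            Set.ncard_le_ncard hsub (Set.toFinite _)
        _ ≤ (G.neighborSet v ∩ A').ncard + (G.neighborSet v ∩ P).ncard :=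
            Set.ncard_union_le _ _
        _ ≤ d := by have := h4 v hv; have := hcutB v hv; omega
    · have hsub : G.neighborSet v ∩ (A' ∪ P ∪ (JA \ Q)) ⊆ G.neighborSet v ∩ A' := by
        rintro u ⟨hu, (hb | hb) | hb⟩
        · exact ⟨hu, hb⟩
        · exact absurd (hA'V' ((hQ hv).2 hu)) (hP hb).1
        · exact absurd (hA'V' ((hQ hv).2 hu)) hb.1.1
      exact le_trans (Set.ncard_le_ncard hsub (Set.toFinite _)) (h2 v hv)
    · have hsub : G.neighborSet v ∩ (A' ∪ P ∪ (JA \ Q)) ⊆ (∅ : Set V) := by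
        rintro u ⟨hu, (hb | hb) | hb⟩
        · exact absurd (hv.1.2 hu) fun h => Set.disjoint_left.mp hdisj hb h
        · exact absurd (hB'V' (hv.1.2 hu)) (hP hb).1
        · exact absurd (hB'V' (hv.1.2 hu)) hb.1.1
      have := Set.ncard_le_ncard hsub (Set.toFinite _)
      rw [Set.ncard_empty] at this; omega
  refine ⟨⟨⟨hA'ne.choose, Or.inl (Or.inl hA'ne.choose_spec)⟩,
          ⟨hB'ne.choose, Or.inl (Or.inl hB'ne.choose_spec)⟩, ?_, ?_, keyA, keyB⟩, ?_⟩
  · rw [Set.disjoint_left]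
    rintro x ((hx | hx) | hx) ((hy | hy) | hy)
    · exact Set.disjoint_left.mp hdisj hx hy
    · exact (hQ hy).1 (hA'V' hx)
    · exact hy.1.1 (hA'V' hx)
    · exact (hP hx).1 (hB'V' hy)
    · exact hJAB x (hQ hy) (hP hx)
    · exact hy.2 hx
    · exact hx.1.1 (hB'V' hy)
    · exact hx.2 hy
    · exact hJAB x hx.1 hy.1
  · ext v
    simp only [Set.mem_univ, iff_true, Set.mem_union, Set.mem_diff]
    by_cases hv : v ∈ V'
    · rcases hunion ▸ hv with h | h
      · exact Or.inl (Or.inl (Or.inl h))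
      · exact Or.inr (Or.inl (Or.inl h))
    · rcases hmono v hv with h | h
      · by_cases hq : v ∈ Q
        · exact Or.inr (Or.inl (Or.inr hq))
        · exact Or.inl (Or.inr ⟨⟨hv, h⟩, hq⟩)
      · by_cases hp : v ∈ P
        · exact Or.inl (Or.inl (Or.inr hp))
        · exact Or.inr (Or.inr ⟨⟨hv, h⟩, hp⟩)
  · rintro e ⟨he, u, v, rfl, hu, hv⟩
    exact ⟨he, u, v, rfl, Or.inl (Or.inl hu), Or.inl (Or.inl hv)⟩
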